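/- Simplicity of the recursively pasted permutations: define θ₀ to be the identity permutation of {1} and, for k ≥ 0, define θ_{k+1} to be the permutation of {1,…,2^{k+1}} with θ_{k+1}(i) = i + 2^k for 1 ≤ i ≤ 2^k and θ_{k+1}(2^k + i) = θ_k(i) for 1 ≤ i ≤ 2^k. Then for every k and every j with 0 ≤ j ≤ k, the permutation θ_k^(2^j) maps each block P(2^k, 2^j, i) = {(i−1)·2^{k−j}+1, …, i·2^{k−j}} (for 1 ≤ i ≤ 2^j) onto itself, and for every j with 0 ≤ j < k, θ_k^(2^j) maps each block P(2^k, 2^{j+1}, i) (of size 2^{k−j−1}) onto a set disjoint from it. -/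

import Mathlib

/-- Left pasting `α |◇ β`: the permutation of `{1,…,m+n}` with
`(α |◇ β)(i) = α(i) + n` for `1 ≤ i ≤ m` and `(α |◇ β)(m+i) = β(i)` for `1 ≤ i ≤ n`. -/
def pasteLeft {m n : ℕ} (α : Equiv.Perm (Fin m)) (β : Equiv.Perm (Fin n)) :
    Equiv.Perm (Fin (m + n)) :=
  finSumFinEquiv.symm.trans ((Equiv.sumCongr α β).trans
    ((Equiv.sumComm (Fin m) (Fin n)).trans (finSumFinEquiv.trans (finCongr (Nat.add_comm n m)))))

/-- The recursively pasted permutations `θ_k` of order a power of two: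
`θ₀ = Id_{1}` and `θ_{k+1} = e_{2^k} |◇ θ_k`, where `e_{2^k}` is the identity
permutation of `{1,…,2^k}`.  Thus `θ_{k+1}(i) = i + 2^k` for `1 ≤ i ≤ 2^k` and
`θ_{k+1}(2^k + i) = θ_k(i)` for `1 ≤ i ≤ 2^k`. -/
def thetaPow2 : (k : ℕ) → Equiv.Perm (Fin (2 ^ k))
  | 0 => 1
  | k + 1 =>
    (finCongr (((pow_succ 2 k).trans (mul_two (2 ^ k))).symm : 2 ^ k + 2 ^ k = 2 ^ (k + 1))).permCongr
      (pasteLeft (1 : Equiv.Perm (Fin (2 ^ k))) (thetaPow2 k))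

/-- The `i`-th block `P(2^k, 2^j, i)` (for `1 ≤ i ≤ 2^j`) of the partition of `{1,…,2^k}`
into `2^j` consecutive intervals of length `2^(k−j)`, i.e. `{(i−1)·2^(k−j)+1, …, i·2^(k−j)}`.
Here `x : Fin (2^k)` represents the point `(x : ℕ) + 1`. -/
def block (k j i : ℕ) : Set (Fin (2 ^ k)) :=
  {x : Fin (2 ^ k) | (i - 1) * 2 ^ (k - j) ≤ (x : ℕ) ∧ (x : ℕ) < i * 2 ^ (k - j)}

/-- Simplicity of the recursively pasted permutations `θ_k`: for `0 ≤ j ≤ k`, the iterate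
`θ_k^(2^j)` maps each block `P(2^k, 2^j, i)` (with `1 ≤ i ≤ 2^j`) onto itself, and for
`0 ≤ j < k` it maps each block `P(2^k, 2^{j+1}, i)` (with `1 ≤ i ≤ 2^{j+1}`) onto a set
disjoint from it. -/
lemma pasteLeft_apply_left {m n : ℕ} (α : Equiv.Perm (Fin m)) (β : Equiv.Perm (Fin n))
    (x : Fin (m + n)) (h : (x : ℕ) < m) :
    ((pasteLeft α β) x : ℕ) = (α ⟨x, h⟩ : ℕ) + n := by
  obtain ⟨v, hv⟩ := x
  have hs : finSumFinEquiv.symm (⟨v, hv⟩ : Fin (m + n)) = Sum.inl (⟨v, h⟩ : Fin m) := by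
    have hx : (⟨v, hv⟩ : Fin (m + n)) = Fin.castAdd n ⟨v, h⟩ := by ext; simp
    rw [hx, finSumFinEquiv_symm_apply_castAdd]
  simp [pasteLeft, hs]

lemma pasteLeft_apply_right {m n : ℕ} (α : Equiv.Perm (Fin m)) (β : Equiv.Perm (Fin n))
    (x : Fin (m + n)) (h : m ≤ (x : ℕ)) :
    ((pasteLeft α β) x : ℕ) = (β ⟨(x : ℕ) - m, by have := x.isLt; omega⟩ : ℕ) := by
  obtain ⟨v, hv⟩ := x
  simp only [Fin.val_mk] at h ⊢
  have h' : v - m < n := by omega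
  have hs : finSumFinEquiv.symm (⟨v, hv⟩ : Fin (m + n)) = Sum.inr (⟨v - m, h'⟩ : Fin n) := by
    have hx : (⟨v, hv⟩ : Fin (m + n)) = Fin.natAdd m ⟨v - m, h'⟩ := by
      ext; show v = m + (v - m); omega
    rw [hx, finSumFinEquiv_symm_apply_natAdd]
  simp [pasteLeft, hs]

lemma two_pow_succ' (k : ℕ) : 2 ^ (k + 1) = 2 ^ k + 2 ^ k := by ring

lemma thetaPow2_succ_apply (k : ℕ) (x : Fin (2 ^ (k+1))) :
    ((thetaPow2 (k+1)) x : ℕ) =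
      if h : (x:ℕ) < 2 ^ k then (x:ℕ) + 2 ^ k
      else (thetaPow2 k ⟨(x:ℕ) - 2 ^ k, by have := x.isLt; have := two_pow_succ' k; omega⟩ : ℕ) := by
  show ((pasteLeft (1 : Equiv.Perm (Fin (2^k))) (thetaPow2 k))
      ((finCongr (two_pow_succ' k) x)) : ℕ) = _
  by_cases h : (x : ℕ) < 2 ^ k
  · rw [dif_pos h, pasteLeft_apply_left _ _ _ (by simpa using h)]
    simp
  · rw [dif_neg h, pasteLeft_apply_right _ _ _ (by simpa using h)]
    rfl

/-- `G k t n` : the value of `θ_k^t` at `n % 2^k`, as a natural number. -/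
def G (k t n : ℕ) : ℕ :=
  ((thetaPow2 k ^ t) ⟨n % 2 ^ k, Nat.mod_lt _ (by positivity)⟩ : ℕ)

lemma G_lt (k t n : ℕ) : G k t n < 2 ^ k := Fin.isLt _

lemma G_eq_of_lt {k t n : ℕ} (h : n < 2 ^ k) :
    G k t n = ((thetaPow2 k ^ t) ⟨n, h⟩ : ℕ) := by
  unfold G; congr 2; exact Fin.ext (Nat.mod_eq_of_lt h)

lemma perm_pow_val (k t : ℕ) (x : Fin (2 ^ k)) :
    ((thetaPow2 k ^ t) x : ℕ) = G k t (x : ℕ) := by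
  rw [G_eq_of_lt x.isLt]

lemma G_add (k a b n : ℕ) : G k (a + b) n = G k a (G k b n) := by
  have h1 : G k b n < 2 ^ k := G_lt k b n
  rw [G_eq_of_lt h1]
  unfold G
  rw [pow_add, Equiv.Perm.mul_apply]

lemma G_one (k n : ℕ) (h : n < 2 ^ k) :
    G k 1 n = ((thetaPow2 k) ⟨n, h⟩ : ℕ) := by
  rw [G_eq_of_lt h, pow_one]

/-- `F k n` : the value of `θ_k` at `n`, for `n < 2^k`. -/
def F (k n : ℕ) : ℕ := G k 1 n

lemma F_lt (k n : ℕ) : F k n < 2 ^ k := G_lt k 1 n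

lemma F_succ (k n : ℕ) (hn : n < 2 ^ (k + 1)) :
    F (k + 1) n = if n < 2 ^ k then n + 2 ^ k else F k (n - 2 ^ k) := by
  have hp := two_pow_succ' k
  rw [F, G_one (k+1) n hn, thetaPow2_succ_apply]
  by_cases h : n < 2 ^ k
  · rw [dif_pos h, if_pos h]
  · rw [dif_neg h, if_neg h, F, G_one k (n - 2^k) (by omega)]

lemma F_sq (k n : ℕ) (hn : n < 2 ^ (k + 1)) :
    F (k + 1) (F (k + 1) n) = (n / 2 ^ k) * 2 ^ k + F k (n % 2 ^ k) := by
  have hp := two_pow_succ' k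
  have hpos : 0 < 2 ^ k := by positivity
  by_cases h : n < 2 ^ k
  · rw [F_succ k n hn, if_pos h, F_succ k (n + 2^k) (by omega), if_neg (by omega)]
    rw [Nat.div_eq_of_lt h, Nat.mod_eq_of_lt h]
    simp
  · rw [F_succ k n hn, if_neg h]
    have hF := F_lt k (n - 2^k)
    rw [F_succ k (F k (n - 2^k)) (by omega), if_pos hF]
    have hd : n / 2 ^ k = 1 := Nat.div_eq_of_lt_le (by omega) (by omega)
    have hm : n % 2 ^ k = n - 2 ^ k := by
      rw [Nat.mod_eq_sub_mod (by omega), Nat.mod_eq_of_lt (by omega)]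
    rw [hd, hm]; omega

lemma key (j : ℕ) : ∀ k, j ≤ k → ∀ n, n < 2 ^ k →
    G k (2 ^ j) n = (n / 2 ^ (k - j)) * 2 ^ (k - j) + F (k - j) (n % 2 ^ (k - j)) := by
  induction j with
  | zero =>
    intro k _ n hn
    simp only [pow_zero, Nat.sub_zero]
    rw [Nat.div_eq_of_lt hn, Nat.mod_eq_of_lt hn, F]
    simp
  | succ j ih =>
    intro k hjk n hn
    obtain ⟨s, hkj⟩ : ∃ s, k - j = s + 1 := ⟨k - (j + 1), by omega⟩
    have hs : k - (j + 1) = s := by omega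
    have hspos : 0 < 2 ^ s := by positivity
    have hp : (2 : ℕ) ^ (s + 1) = 2 ^ s * 2 := by ring
    have h1 : G k (2 ^ (j + 1)) n = G k (2 ^ j) (G k (2 ^ j) n) := by
      rw [← G_add]; congr 1; ring
    have h2 : G k (2 ^ j) n
        = (n / 2 ^ (k - j)) * 2 ^ (k - j) + F (k - j) (n % 2 ^ (k - j)) := ih k (by omega) n hn
    have hf : F (k - j) (n % 2 ^ (k - j)) < 2 ^ (k - j) := F_lt _ _
    have hpos : 0 < 2 ^ (k - j) := by positivity
    have h3 : ((n / 2 ^ (k - j)) * 2 ^ (k - j) + F (k - j) (n % 2 ^ (k - j))) / 2 ^ (k - j)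
        = n / 2 ^ (k - j) := by
      rw [mul_comm (n / 2 ^ (k - j)) (2 ^ (k - j)), Nat.mul_add_div hpos,
        Nat.div_eq_of_lt hf, Nat.add_zero]
    have h4 : ((n / 2 ^ (k - j)) * 2 ^ (k - j) + F (k - j) (n % 2 ^ (k - j))) % 2 ^ (k - j)
        = F (k - j) (n % 2 ^ (k - j)) := by
      rw [mul_comm (n / 2 ^ (k - j)) (2 ^ (k - j)), Nat.mul_add_mod, Nat.mod_eq_of_lt hf]
    rw [h1, h2, ih k (by omega) _ (by rw [← h2]; exact G_lt k (2 ^ j) n), h3, h4]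
    have hrlt : n % 2 ^ (k - j) < 2 ^ (k - j) := Nat.mod_lt _ hpos
    have h5 : F (k - j) (F (k - j) (n % 2 ^ (k - j)))
        = (n % 2 ^ (k - j) / 2 ^ s) * 2 ^ s + F s (n % 2 ^ (k - j) % 2 ^ s) := by
      have := F_sq s (n % 2 ^ (k - j)) (by rw [← hkj]; exact hrlt)
      rw [hkj]
      rw [hkj] at this
      exact this
    rw [h5, hs]
    have hmod : n % 2 ^ (k - j) % 2 ^ s = n % 2 ^ s := by
      rw [hkj, hp]; exact Nat.mod_mod_of_dvd n ⟨2, rfl⟩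
    have hdiv : n / 2 ^ (k - j) = n / 2 ^ s / 2 := by
      rw [hkj, hp, ← Nat.div_div_eq_div_mul]
    have hrd : n % 2 ^ (k - j) / 2 ^ s = n / 2 ^ s % 2 := by
      rw [hkj, hp]; exact Nat.mod_mul_right_div_self n (2 ^ s) 2
    have harith : (n / 2 ^ (k - j)) * 2 ^ (k - j) + (n % 2 ^ (k - j) / 2 ^ s) * 2 ^ s
        = (n / 2 ^ s) * 2 ^ s := by
      rw [hdiv, hrd, hkj, hp]
      conv_rhs => rw [← Nat.div_add_mod (n / 2 ^ s) 2]
      ring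
    rw [hmod]
    omega

lemma F_half_swap (s r : ℕ) (hr : r < 2 ^ (s + 1)) :
    F (s + 1) r < 2 ^ s ↔ 2 ^ s ≤ r := by
  have hp := two_pow_succ' s
  rw [F_succ s r hr]
  by_cases h : r < 2 ^ s
  · rw [if_pos h]; omega
  · rw [if_neg h]
    have := F_lt s (r - 2 ^ s)
    simp [this]; omega

lemma mem_block_iff (k j i : ℕ) (hi : 1 ≤ i) (x : Fin (2 ^ k)) :
    x ∈ block k j i ↔ (x : ℕ) / 2 ^ (k - j) = i - 1 := by
  have hpos : 0 < 2 ^ (k - j) := by positivity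
  constructor
  · rintro ⟨h1, h2⟩
    exact Nat.div_eq_of_lt_le h1 (by rw [show i - 1 + 1 = i by omega]; exact h2)
  · intro h
    have h1 := Nat.div_add_mod (x : ℕ) (2 ^ (k - j))
    have h2 := Nat.mod_lt (x : ℕ) hpos
    have h3 : (x : ℕ) < ((x : ℕ) / 2 ^ (k - j) + 1) * 2 ^ (k - j) := by
      have hc : ((x : ℕ) / 2 ^ (k - j) + 1) * 2 ^ (k - j)
          = 2 ^ (k - j) * ((x : ℕ) / 2 ^ (k - j)) + 2 ^ (k - j) := by ring
      omega
    rw [h, show i - 1 + 1 = i by omega] at h3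
    exact ⟨h ▸ Nat.div_mul_le_self _ _, h3⟩

theorem thetaPow2_simple (k : ℕ) :
    (∀ j, j ≤ k → ∀ i, 1 ≤ i → i ≤ 2 ^ j →
      ⇑(thetaPow2 k ^ 2 ^ j) '' block k j i = block k j i) ∧
    (∀ j, j < k → ∀ i, 1 ≤ i → i ≤ 2 ^ (j + 1) →
      Disjoint (⇑(thetaPow2 k ^ 2 ^ j) '' block k (j + 1) i) (block k (j + 1) i)) := by
  constructor
  · intro j hjk i hi _
    have hpos : 0 < 2 ^ (k - j) := by positivity
    have hquot : ∀ x : Fin (2 ^ k),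
        (((thetaPow2 k ^ 2 ^ j) x : ℕ)) / 2 ^ (k - j) = (x : ℕ) / 2 ^ (k - j) := by
      intro x
      rw [perm_pow_val, key j k hjk _ x.isLt,
        mul_comm ((x : ℕ) / 2 ^ (k - j)) (2 ^ (k - j)), Nat.mul_add_div hpos,
        Nat.div_eq_of_lt (F_lt _ _), Nat.add_zero]
    have hmem : ∀ x : Fin (2 ^ k),
        (thetaPow2 k ^ 2 ^ j) x ∈ block k j i ↔ x ∈ block k j i := by
      intro x
      rw [mem_block_iff k j i hi, mem_block_iff k j i hi, hquot]
    ext y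
    constructor
    · rintro ⟨x, hx, rfl⟩; exact (hmem x).mpr hx
    · intro hy
      refine ⟨(thetaPow2 k ^ 2 ^ j)⁻¹ y, (hmem _).mp ?_, Equiv.apply_symm_apply _ y⟩
      rw [← Equiv.Perm.mul_apply, mul_inv_cancel, Equiv.Perm.one_apply]; exact hy
  · intro j hjk i hi _
    obtain ⟨s, hkj⟩ : ∃ s, k - j = s + 1 := ⟨k - (j + 1), by omega⟩
    have hs : k - (j + 1) = s := by omega
    have hspos : 0 < 2 ^ s := by positivity
    have hp : (2 : ℕ) ^ (s + 1) = 2 ^ s * 2 := by ring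
    have hquot : ∀ x : Fin (2 ^ k),
        (((thetaPow2 k ^ 2 ^ j) x : ℕ)) / 2 ^ s ≠ (x : ℕ) / 2 ^ s := by
      intro x
      rw [perm_pow_val, key j k (le_of_lt hjk) _ x.isLt, hkj]
      have hrL : (x : ℕ) % 2 ^ (s + 1) < 2 ^ (s + 1) := Nat.mod_lt _ (by positivity)
      have hf : F (s + 1) ((x : ℕ) % 2 ^ (s + 1)) < 2 ^ (s + 1) := F_lt _ _
      have hswap := F_half_swap s ((x : ℕ) % 2 ^ (s + 1)) hrL
      have hlhs : ((x : ℕ) / 2 ^ (s + 1) * 2 ^ (s + 1) + F (s + 1) ((x : ℕ) % 2 ^ (s + 1)))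
            / 2 ^ s
          = 2 * ((x : ℕ) / 2 ^ (s + 1)) + F (s + 1) ((x : ℕ) % 2 ^ (s + 1)) / 2 ^ s := by
        conv_lhs => rw [hp, show (x : ℕ) / (2 ^ s * 2) * (2 ^ s * 2)
          = 2 ^ s * (2 * ((x : ℕ) / (2 ^ s * 2))) by ring]
        rw [Nat.mul_add_div hspos, hp]
      have hrhs : (x : ℕ) / 2 ^ s
          = 2 * ((x : ℕ) / 2 ^ (s + 1)) + ((x : ℕ) % 2 ^ (s + 1)) / 2 ^ s := by
        have h1 : (x : ℕ) / 2 ^ (s + 1) = (x : ℕ) / 2 ^ s / 2 := by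
          rw [hp, ← Nat.div_div_eq_div_mul]
        have h2 : (x : ℕ) % 2 ^ (s + 1) / 2 ^ s = (x : ℕ) / 2 ^ s % 2 := by
          rw [hp]; exact Nat.mod_mul_right_div_self _ (2 ^ s) 2
        omega
      have hne : F (s + 1) ((x : ℕ) % 2 ^ (s + 1)) / 2 ^ s
          ≠ ((x : ℕ) % 2 ^ (s + 1)) / 2 ^ s := by
        rcases Nat.lt_or_ge (F (s + 1) ((x : ℕ) % 2 ^ (s + 1))) (2 ^ s) with h | h
        · have h1 : F (s + 1) ((x : ℕ) % 2 ^ (s + 1)) / 2 ^ s = 0 := Nat.div_eq_of_lt h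
          have h2 : 2 ^ s ≤ (x : ℕ) % 2 ^ (s + 1) := hswap.mp h
          have h3 : 1 ≤ ((x : ℕ) % 2 ^ (s + 1)) / 2 ^ s := (Nat.one_le_div_iff hspos).mpr h2
          omega
        · have h1 : 1 ≤ F (s + 1) ((x : ℕ) % 2 ^ (s + 1)) / 2 ^ s :=
            (Nat.one_le_div_iff hspos).mpr h
          have h2 : (x : ℕ) % 2 ^ (s + 1) < 2 ^ s := by
            by_contra hc
            have := hswap.mpr (by omega)
            omega
          have h3 : ((x : ℕ) % 2 ^ (s + 1)) / 2 ^ s = 0 := Nat.div_eq_of_lt h2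
          omega
      omega
    rw [Set.disjoint_left]
    rintro y ⟨x, hx, rfl⟩ hy
    rw [mem_block_iff k (j + 1) i hi, hs] at hx hy
    exact hquot x (hy.trans hx.symm)
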